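/- Let 0 < m < n and let X and Y be independent random variables with Gamma distributions of shapes m and n respectively, both with rate 1. Then Pr(XY ≤ ε)/ε^m → Γ(n − m)/(m·Γ(m)·Γ(n)) as ε → 0⁺. -/

import Mathlib

open MeasureTheory ProbabilityTheory Filter Topology


lemma lint_rpow_aux {m : ℝ} (hm : 0 < m) {t : ℝ} (ht : 0 < t) {c : ℝ} (hc : 0 ≤ c) :
    ∫⁻ x in Set.Ioc 0 t, ENNReal.ofReal (c * x ^ (m - 1)) = ENNReal.ofReal (c * (t ^ m / m)) := by
  have hint : IntegrableOn (fun x : ℝ => x ^ (m - 1)) (Set.Ioc 0 t) :=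
    (intervalIntegral.intervalIntegrable_rpow' (by linarith)).1
  rw [← ofReal_integral_eq_lintegral_ofReal (hint.const_mul c)]
  · congr 1
    rw [integral_const_mul, ← intervalIntegral.integral_of_le ht.le,
      integral_rpow (Or.inl (by linarith))]
    rw [sub_add_cancel, Real.zero_rpow hm.ne', sub_zero]
  · refine (ae_restrict_iff' measurableSet_Ioc).2 (Filter.Eventually.of_forall fun x hx => ?_)
    have := Real.rpow_nonneg hx.1.le (m - 1)
    positivity

lemma gamma_Iic_eq {m : ℝ} {t : ℝ} (ht : 0 < t) :
    gammaMeasure m 1 (Set.Iic t) = ∫⁻ x in Set.Ioc 0 t, gammaPDF m 1 x := by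
  rw [gammaMeasure, withDensity_apply _ measurableSet_Iic,
    lintegral_Iic_eq_lintegral_Iio_add_Icc _ ht.le,
    ProbabilityTheory.lintegral_gammaPDF_of_nonpos (le_refl (0:ℝ)), zero_add,
    ← setLIntegral_congr Ioc_ae_eq_Icc]

lemma gamma_Iic_upper {m : ℝ} (hm : 0 < m) {t : ℝ} (ht : 0 < t) :
    gammaMeasure m 1 (Set.Iic t) ≤ ENNReal.ofReal ((Real.Gamma m)⁻¹ * (t ^ m / m)) := by
  rw [gamma_Iic_eq ht, ← lint_rpow_aux hm ht (inv_nonneg.2 (Real.Gamma_pos_of_pos hm).le)]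
  refine setLIntegral_mono (by fun_prop) fun x hx => ?_
  rw [gammaPDF_of_nonneg hx.1.le]
  refine ENNReal.ofReal_le_ofReal ?_
  rw [Real.one_rpow, one_mul, one_div]
  have h1 : Real.exp (-x) ≤ 1 := Real.exp_le_one_iff.2 (by linarith [hx.1])
  -- note
  have h2 : 0 ≤ (Real.Gamma m)⁻¹ * x ^ (m - 1) := by
    have := Real.rpow_nonneg hx.1.le (m - 1)
    have := (Real.Gamma_pos_of_pos hm).le
    positivity
  calc (Real.Gamma m)⁻¹ * x ^ (m-1) * Real.exp (-x)
      ≤ (Real.Gamma m)⁻¹ * x ^ (m-1) * 1 := mul_le_mul_of_nonneg_left h1 h2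
    _ = (Real.Gamma m)⁻¹ * x ^ (m-1) := mul_one _

lemma gamma_Iic_lower {m : ℝ} (hm : 0 < m) {t : ℝ} (ht : 0 < t) :
    ENNReal.ofReal (Real.exp (-t) * (Real.Gamma m)⁻¹ * (t ^ m / m))
      ≤ gammaMeasure m 1 (Set.Iic t) := by
  rw [gamma_Iic_eq ht,
    ← lint_rpow_aux hm ht (by positivity : (0:ℝ) ≤ Real.exp (-t) * (Real.Gamma m)⁻¹)]
  refine setLIntegral_mono ((measurable_gammaPDFReal m 1).ennreal_ofReal) fun x hx => ?_
  rw [gammaPDF_of_nonneg hx.1.le]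
  refine ENNReal.ofReal_le_ofReal ?_
  rw [Real.one_rpow, one_mul, one_div]
  have h1 : Real.exp (-t) ≤ Real.exp (-x) := Real.exp_le_exp.2 (by linarith [hx.2])
  have h2 : 0 ≤ (Real.Gamma m)⁻¹ * x ^ (m - 1) := by
    have := Real.rpow_nonneg hx.1.le (m - 1)
    have := (Real.Gamma_pos_of_pos hm).le
    positivity
  calc Real.exp (-t) * (Real.Gamma m)⁻¹ * x ^ (m-1)
      = ((Real.Gamma m)⁻¹ * x ^ (m-1)) * Real.exp (-t) := by ring
    _ ≤ ((Real.Gamma m)⁻¹ * x ^ (m-1)) * Real.exp (-x) :=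
        mul_le_mul_of_nonneg_left h1 h2
    _ = (Real.Gamma m)⁻¹ * x ^ (m-1) * Real.exp (-x) := by ring

lemma alg_aux {m ε y : ℝ} (hε : 0 < ε) (hy : 0 < y) :
    ENNReal.ofReal ((Real.Gamma m)⁻¹ * ((ε/y) ^ m / m)) * (ENNReal.ofReal (ε ^ m))⁻¹
      = ENNReal.ofReal ((Real.Gamma m)⁻¹ * (y ^ (-m) / m)) := by
  have h : (ε/y) ^ m = ε ^ m * y ^ (-m) := by
    rw [div_eq_mul_inv, Real.mul_rpow hε.le (inv_nonneg.2 hy.le), Real.inv_rpow hy.le,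
      ← Real.rpow_neg hy.le]
  have h2 : (Real.Gamma m)⁻¹ * ((ε/y) ^ m / m) = ε ^ m * ((Real.Gamma m)⁻¹ * (y ^ (-m) / m)) := by
    rw [h]; ring
  rw [h2, ENNReal.ofReal_mul (Real.rpow_nonneg hε.le m), mul_comm (ENNReal.ofReal (ε ^ m)) _,
    mul_assoc, ENNReal.mul_inv_cancel (ENNReal.ofReal_pos.2 (Real.rpow_pos_of_pos hε m)).ne'
      ENNReal.ofReal_ne_top, mul_one]

lemma squeeze_aux {m y : ℝ} (hm : 0 < m) (hy : 0 < y) :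
    Filter.Tendsto (fun ε : ℝ => gammaMeasure m 1 (Set.Iic (ε/y)) * (ENNReal.ofReal (ε ^ m))⁻¹)
      (nhdsWithin 0 (Set.Ioi 0)) (nhds (ENNReal.ofReal ((Real.Gamma m)⁻¹ * (y ^ (-m) / m)))) := by
  have hlow : Filter.Tendsto
      (fun ε : ℝ => ENNReal.ofReal (Real.exp (-(ε/y))) *
        ENNReal.ofReal ((Real.Gamma m)⁻¹ * (y ^ (-m) / m)))
      (nhdsWithin 0 (Set.Ioi 0)) (nhds (ENNReal.ofReal ((Real.Gamma m)⁻¹ * (y ^ (-m) / m)))) := by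
    have h1 : Filter.Tendsto (fun ε : ℝ => ENNReal.ofReal (Real.exp (-(ε/y))))
        (nhdsWithin 0 (Set.Ioi 0)) (nhds 1) := by
      have h0 : Filter.Tendsto (fun ε : ℝ => Real.exp (-(ε/y))) (nhdsWithin 0 (Set.Ioi 0))
          (nhds 1) := by
        have := (Real.continuous_exp.comp ((continuous_id.div_const y).neg)).tendsto 0
        simpa [Function.comp_def] using this.mono_left nhdsWithin_le_nhds
      simpa [Function.comp_def] using (ENNReal.continuous_ofReal.tendsto 1).comp h0
    simpa [one_mul] using ENNReal.Tendsto.mul_const h1 (Or.inr ENNReal.ofReal_ne_top)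
  refine tendsto_of_tendsto_of_tendsto_of_le_of_le' hlow tendsto_const_nhds ?_ ?_
  · filter_upwards [self_mem_nhdsWithin] with ε (hε : ε ∈ Set.Ioi 0)
    have hε' : (0:ℝ) < ε := hε
    have htq : 0 < ε / y := div_pos hε' hy
    rw [← alg_aux hε' hy, ← mul_assoc, ← ENNReal.ofReal_mul (Real.exp_nonneg _), ← mul_assoc]
    exact mul_le_mul_of_nonneg_right (gamma_Iic_lower hm htq) zero_le
  · filter_upwards [self_mem_nhdsWithin] with ε (hε : ε ∈ Set.Ioi 0)
    have hε' : (0:ℝ) < ε := hε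
    have htq : 0 < ε / y := div_pos hε' hy
    rw [← alg_aux hε' hy]
    exact mul_le_mul_of_nonneg_right (gamma_Iic_upper hm htq) zero_le

lemma gamma_ae_pos (n : ℝ) : ∀ᵐ y ∂(gammaMeasure n 1), 0 < y := by
  rw [ae_iff]
  have h : {y : ℝ | ¬ 0 < y} = Set.Iic 0 := by ext y; simp [not_lt]
  rw [h, gammaMeasure, withDensity_apply _ measurableSet_Iic,
    ← setLIntegral_congr Iio_ae_eq_Iic,
    ProbabilityTheory.lintegral_gammaPDF_of_nonpos le_rfl]

lemma bound_int {m n : ℝ} (hm : 0 < m) (hmn : m < n) :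
    ∫⁻ y, ENNReal.ofReal ((Real.Gamma m)⁻¹ * (y ^ (-m) / m)) ∂(gammaMeasure n 1)
      = ENNReal.ofReal (Real.Gamma (n-m) / (m * Real.Gamma m * Real.Gamma n)) := by
  have hn : 0 < n := hm.trans hmn
  have hΓm := Real.Gamma_pos_of_pos hm
  have hΓn := Real.Gamma_pos_of_pos hn
  have hg : Measurable fun y : ℝ => ENNReal.ofReal ((Real.Gamma m)⁻¹ * (y ^ (-m) / m)) := by
    fun_prop
  have hpdf : Measurable (gammaPDF n 1) := (measurable_gammaPDFReal n 1).ennreal_ofReal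
  rw [gammaMeasure, lintegral_withDensity_eq_lintegral_mul _ hpdf hg,
    ← lintegral_add_compl _ (measurableSet_Iic (a := (0:ℝ)))]
  have hzero : ∫⁻ y in Set.Iic 0,
      (gammaPDF n 1 * fun y : ℝ => ENNReal.ofReal ((Real.Gamma m)⁻¹ * (y ^ (-m) / m))) y = 0 := by
    rw [← setLIntegral_congr Iio_ae_eq_Iic,
      setLIntegral_congr_fun (g := fun _ => 0) measurableSet_Iio
        (fun y (hy : y < 0) => by
          simp [gammaPDF_of_neg hy]),
      lintegral_zero]
  rw [hzero, zero_add, Set.compl_Iic]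
  have hcong : ∫⁻ y in Set.Ioi 0,
      (gammaPDF n 1 * fun y : ℝ => ENNReal.ofReal ((Real.Gamma m)⁻¹ * (y ^ (-m) / m))) y
      = ∫⁻ y in Set.Ioi 0, ENNReal.ofReal
          ((1 / (m * Real.Gamma m * Real.Gamma n)) * (Real.exp (-y) * y ^ (n - m - 1))) := by
    refine setLIntegral_congr_fun measurableSet_Ioi (fun y (hy : 0 < y) => ?_)
    rw [Pi.mul_apply, gammaPDF_of_nonneg hy.le, ← ENNReal.ofReal_mul (by
      have := Real.rpow_nonneg hy.le (n-1)
      positivity)]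
    congr 1
    have hyr : y ^ (n - m - 1) = y ^ (n - 1) * y ^ (-m) := by
      rw [← Real.rpow_add hy]; ring_nf
    rw [Real.one_rpow, hyr]
    field_simp
  rw [hcong, ← ofReal_integral_eq_lintegral_ofReal
    (((Real.GammaIntegral_convergent (by linarith : (0:ℝ) < n - m)).const_mul _))
    ((ae_restrict_iff' measurableSet_Ioi).2 (ae_of_all _ fun y (hy : 0 < y) => by
      have := Real.rpow_nonneg hy.le (n - m - 1)
      have := Real.exp_nonneg (-y)
      positivity)),
    integral_const_mul, ← Real.Gamma_eq_integral (by linarith : (0:ℝ) < n - m)]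
  congr 1
  ring

theorem stmt_17 {Ω : Type*} [MeasurableSpace Ω] (P : Measure Ω) [IsProbabilityMeasure P]
    (m n : ℝ) (hm : 0 < m) (hmn : m < n) (X Y : Ω → ℝ)
    (hX : Measurable X) (hY : Measurable Y)
    (hXlaw : P.map X = gammaMeasure m 1) (hYlaw : P.map Y = gammaMeasure n 1)
    (hindep : IndepFun X Y P) :
    Tendsto (fun ε : ℝ => (P {ω | X ω * Y ω ≤ ε}).toReal / ε ^ m)
      (𝓝[>] 0) (𝓝 (Real.Gamma (n - m) / (m * Real.Gamma m * Real.Gamma n))) := by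
  have hn : 0 < n := hm.trans hmn
  haveI : IsProbabilityMeasure (gammaMeasure m 1) := isProbabilityMeasure_gammaMeasure hm one_pos
  haveI : IsProbabilityMeasure (gammaMeasure n 1) := isProbabilityMeasure_gammaMeasure hn one_pos
  have hmap : P.map (fun ω => (X ω, Y ω)) = (gammaMeasure m 1).prod (gammaMeasure n 1) := by
    rw [← hXlaw, ← hYlaw]
    exact (ProbabilityTheory.indepFun_iff_map_prod_eq_prod_map_map hX.aemeasurable
      hY.aemeasurable).1 hindep
  have hae := gamma_ae_pos n
  have T : Tendsto (fun ε : ℝ => ∫⁻ y, gammaMeasure m 1 (Set.Iic (ε/y)) *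
        (ENNReal.ofReal (ε ^ m))⁻¹ ∂(gammaMeasure n 1))
      (𝓝[>] 0)
      (𝓝 (∫⁻ y, ENNReal.ofReal ((Real.Gamma m)⁻¹ * (y ^ (-m) / m)) ∂(gammaMeasure n 1))) := by
    refine tendsto_lintegral_filter_of_dominated_convergence
      (fun y => ENNReal.ofReal ((Real.Gamma m)⁻¹ * (y ^ (-m) / m))) ?_ ?_ ?_ ?_
    · refine Filter.Eventually.of_forall fun ε => ?_
      have hmono : Monotone (fun t : ℝ => gammaMeasure m 1 (Set.Iic t)) :=
        fun a b hab => measure_mono (Set.Iic_subset_Iic.2 hab)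
      exact (hmono.measurable.comp (measurable_const.div measurable_id)).mul_const _
    · filter_upwards [self_mem_nhdsWithin] with ε (hε : ε ∈ Set.Ioi 0)
      filter_upwards [hae] with y hy
      rw [← alg_aux hε hy]
      exact mul_le_mul_of_nonneg_right (gamma_Iic_upper hm (div_pos hε hy)) zero_le
    · rw [bound_int hm hmn]; exact ENNReal.ofReal_ne_top
    · filter_upwards [hae] with y hy
      exact squeeze_aux hm hy
  rw [bound_int hm hmn] at T
  have hC : 0 ≤ Real.Gamma (n - m) / (m * Real.Gamma m * Real.Gamma n) := by
    have := (Real.Gamma_pos_of_pos (by linarith : (0:ℝ) < n - m)).le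
    have := (Real.Gamma_pos_of_pos hm).le
    have := (Real.Gamma_pos_of_pos hn).le
    positivity
  have T2 := (ENNReal.tendsto_toReal (ENNReal.ofReal_ne_top)).comp T
  rw [ENNReal.toReal_ofReal hC] at T2
  refine Filter.Tendsto.congr' ?_ T2
  filter_upwards [self_mem_nhdsWithin] with ε (hε : ε ∈ Set.Ioi 0)
  have hε' : (0:ℝ) < ε := hε
  have hs : MeasurableSet {p : ℝ × ℝ | p.1 * p.2 ≤ ε} :=
    measurableSet_le (measurable_fst.mul measurable_snd) measurable_const
  have hP : P {ω | X ω * Y ω ≤ ε}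
      = ∫⁻ y, gammaMeasure m 1 (Set.Iic (ε/y)) ∂(gammaMeasure n 1) := by
    have h1 : {ω | X ω * Y ω ≤ ε} = (fun ω => (X ω, Y ω)) ⁻¹' {p : ℝ × ℝ | p.1 * p.2 ≤ ε} := rfl
    rw [h1, ← Measure.map_apply (hX.prodMk hY) hs, hmap, Measure.prod_apply_symm hs]
    refine lintegral_congr_ae ?_
    filter_upwards [hae] with y hy
    congr 1
    ext x
    simp only [Set.mem_preimage, Set.mem_setOf_eq, Set.mem_Iic]
    exact (le_div_iff₀ hy).symm
  show (ENNReal.toReal ∘ _) ε = _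
  simp only [Function.comp_apply]
  rw [lintegral_mul_const' _ _ (by simp [Real.rpow_pos_of_pos hε'] : (ENNReal.ofReal (ε ^ m))⁻¹ ≠ ⊤), ← hP,
    ENNReal.toReal_mul, ENNReal.toReal_inv, ENNReal.toReal_ofReal (Real.rpow_nonneg hε'.le m),
    div_eq_mul_inv]
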